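/- Let p be a prime, n ≥ 2, and let x_1,…,x_n, y_1,…,y_n, a be elements of 𝔽_p such that the intervals [x_1,y_1],…,[x_n,y_n] are pairwise disjoint, |[x_i,y_i]| ≥ 3 for all i, ∑_{i=1}^n |[x_i,y_i]| ≤ p − 1, and a ∉ {0, 1, −1}. Define S := {a z + ∑_{j≠i} x_j : i ∈ {1,…,n}, z ∈ [x_i,y_i]}. If x, y ∈ 𝔽_p satisfy S ⊆ [x,y], then |[x,y]| > max_{1≤i≤n} |[x_i,y_i]| + n − 2. -/

import Mathlib

open scoped Pointwise

/-- The interval `[x,y]` in `ZMod p`: `{x, x+1, …, x+i}` where `i ∈ {0,…,p-1}`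
reduces to `y - x` mod `p`. -/
def itv {p : ℕ} (x y : ZMod p) : Finset (ZMod p) :=
  (Finset.range ((y - x).val + 1)).image (fun i : ℕ => x + (i : ZMod p))

set_option linter.unusedSectionVars false

section helpers
variable {p : ℕ} [NeZero p]

lemma natCast_val_self (s : ZMod p) : ((s.val : ℕ) : ZMod p) = s :=
  ZMod.natCast_rightInverse s

lemma val_inj' {s t : ZMod p} (h : s.val = t.val) : s = t := by
  have := natCast_val_self s
  rw [h, natCast_val_self t] at this; exact this.symm

lemma mem_itv {x y s : ZMod p} : s ∈ itv x y ↔ (s - x).val ≤ (y - x).val := by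
  constructor
  · intro hs
    simp only [itv, Finset.mem_image, Finset.mem_range] at hs
    obtain ⟨i, hi, rfl⟩ := hs
    have hip : i < p := lt_of_lt_of_le hi (Nat.succ_le_of_lt (ZMod.val_lt _))
    rw [add_sub_cancel_left, ZMod.val_cast_of_lt hip]
    omega
  · intro h
    simp only [itv, Finset.mem_image, Finset.mem_range]
    exact ⟨(s - x).val, by omega, by rw [natCast_val_self]; ring⟩

lemma mem_itv_of (x y : ZMod p) (k : ℕ) (hk : k ≤ (y - x).val) : x + (k : ZMod p) ∈ itv x y := by
  simp only [itv, Finset.mem_image, Finset.mem_range]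
  exact ⟨k, by omega, rfl⟩

lemma itv_card (x y : ZMod p) : (itv x y).card = (y - x).val + 1 := by
  rw [itv, Finset.card_image_of_injOn, Finset.card_range]
  intro i hi j hj hij
  simp only [Finset.coe_range, Set.mem_Iio] at hi hj
  have hip : i < p := lt_of_lt_of_le hi (Nat.succ_le_of_lt (ZMod.val_lt _))
  have hjp : j < p := lt_of_lt_of_le hj (Nat.succ_le_of_lt (ZMod.val_lt _))
  have : (i : ZMod p) = j := add_left_cancel hij
  have := congrArg ZMod.val this
  rwa [ZMod.val_cast_of_lt hip, ZMod.val_cast_of_lt hjp] at this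

end helpers


theorem stmt_14 (p n : ℕ) (hp : p.Prime) (hn : 2 ≤ n)
    (x y : Fin n → ZMod p) (a : ZMod p)
    (hdisj : ∀ i j, i ≠ j → Disjoint (itv (x i) (y i)) (itv (x j) (y j)))
    (hcard : ∀ i, 3 ≤ (itv (x i) (y i)).card)
    (hsum : ∑ i, (itv (x i) (y i)).card ≤ p - 1)
    (ha0 : a ≠ 0) (ha1 : a ≠ 1) (han1 : a ≠ -1)
    (u v : ZMod p)
    (hS : ∀ i : Fin n, ∀ z ∈ itv (x i) (y i),
      a * z + ∑ j ∈ Finset.univ.erase i, x j ∈ itv u v) :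
    Finset.univ.sup (fun i => (itv (x i) (y i)).card) + n - 2 < (itv u v).card := by
  haveI : Fact p.Prime := ⟨hp⟩
  haveI : NeZero p := ⟨hp.ne_zero⟩
  by_contra hcon
  push_neg at hcon
  -- notation
  set M := Finset.univ.sup (fun i => (itv (x i) (y i)).card) with hM
  set L := (itv u v).card with hLdef
  set C := ∑ j, x j with hC
  have hLval : L = (v - u).val + 1 := itv_card u v
  have hmval : ∀ i, (itv (x i) (y i)).card = (y i - x i).val + 1 := fun i => itv_card _ _
  -- rewrite hS
  have hSm : ∀ i : Fin n, ∀ z ∈ itv (x i) (y i), a * z + (C - x i) ∈ itv u v := by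
    intro i z hz
    have := hS i z hz
    rwa [Finset.sum_erase_eq_sub (Finset.mem_univ i)] at this
  -- the maximum is attained
  haveI : Nonempty (Fin n) := ⟨⟨0, by omega⟩⟩
  obtain ⟨i0, -, hi0⟩ := Finset.exists_mem_eq_sup Finset.univ
    Finset.univ_nonempty (fun i => (itv (x i) (y i)).card)
  -- basic numeric facts
  have hMi : ∀ i, (itv (x i) (y i)).card ≤ M := fun i => Finset.le_sup (f := fun i => (itv (x i) (y i)).card) (Finset.mem_univ i)
  have hM3 : 3 ≤ M := le_trans (hcard i0) (by rw [hM, hi0])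
  have hMsum : M ≤ ∑ i, (itv (x i) (y i)).card := by
    rw [hM, hi0]
    exact Finset.single_le_sum (f := fun i => (itv (x i) (y i)).card)
      (fun i _ => Nat.zero_le _) (Finset.mem_univ i0)
  have hsum_lb : M + 3 * (n - 1) ≤ ∑ i, (itv (x i) (y i)).card := by
    have h1 : (itv (x i0) (y i0)).card + ∑ i ∈ Finset.univ.erase i0, (itv (x i) (y i)).card
        = ∑ i, (itv (x i) (y i)).card :=
      Finset.add_sum_erase _ (fun i => (itv (x i) (y i)).card) (Finset.mem_univ i0)
    have h2 : 3 * (n - 1) ≤ ∑ i ∈ Finset.univ.erase i0, (itv (x i) (y i)).card := by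
      have := Finset.card_nsmul_le_sum (Finset.univ.erase i0)
        (fun i => (itv (x i) (y i)).card) 3 (fun i _ => hcard i)
      rw [Finset.card_erase_of_mem (Finset.mem_univ i0), Finset.card_univ,
        Fintype.card_fin, smul_eq_mul] at this
      omega
    omega
  have hp2 : 2 ≤ p := hp.two_le
  -- KEY 1 : ∑ m_i ≤ L + (M - 1)
  have key1 : ∑ i, (itv (x i) (y i)).card ≤ L + (M - 1) := by
    classical
    set U := Finset.univ.biUnion (fun i => itv (x i) (y i)) with hU
    have hcardU : U.card = ∑ i, (itv (x i) (y i)).card :=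
      Finset.card_biUnion (fun i _ j _ hij => hdisj i j hij)
    set T := ((Finset.range L).image (Nat.cast : ℕ → ZMod p)) ∪
      ((Finset.Ioo (p - M) p).image (Nat.cast : ℕ → ZMod p)) with hT
    have hTcard : T.card ≤ L + (M - 1) := by
      refine le_trans (Finset.card_union_le _ _) ?_
      have h1 : ((Finset.range L).image (Nat.cast : ℕ → ZMod p)).card ≤ L :=
        le_trans Finset.card_image_le (le_of_eq (Finset.card_range L))
      have h2 : ((Finset.Ioo (p - M) p).image (Nat.cast : ℕ → ZMod p)).card ≤ M - 1 := by
        refine le_trans Finset.card_image_le ?_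
        rw [Nat.card_Ioo]
        omega
      omega
    have hmaps : ∀ z ∈ U, (a - 1) * z + (C - u) ∈ T := by
      intro z hz
      rw [hU, Finset.mem_biUnion] at hz
      obtain ⟨i, -, hzi⟩ := hz
      obtain ⟨k, hkp, hk, hzeq⟩ : ∃ k, k < p ∧ k ≤ (y i - x i).val ∧ z = x i + (k : ZMod p) := by
        refine ⟨(z - x i).val, ZMod.val_lt _, mem_itv.mp hzi, ?_⟩
        rw [natCast_val_self]; ring
      have hmem := hSm i z hzi
      set s := a * z + (C - x i) with hs
      have hπs : (s - u).val ≤ (v - u).val := mem_itv.mp hmem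
      have hkM : k + 1 ≤ M := by
        have hhh := hMi i
        rw [hmval i] at hhh
        omega
      have hweq : (a - 1) * z + (C - u) = (s - u) - (k : ZMod p) := by
        rw [hs, hzeq]; ring
      rcases le_or_gt k ((s - u).val) with hle | hlt
      · have heq2 : (a - 1) * z + (C - u) = (((s - u).val - k : ℕ) : ZMod p) := by
          rw [hweq, Nat.cast_sub hle, natCast_val_self]
        rw [hT]
        apply Finset.mem_union_left
        rw [heq2]
        exact Finset.mem_image_of_mem _ (Finset.mem_range.mpr (by omega))
      · have heq2 : (a - 1) * z + (C - u) = (((s - u).val + p - k : ℕ) : ZMod p) := by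
          rw [hweq]
          have hsplit : ((s - u).val + p - k : ℕ) = ((s - u).val + (p - k)) := by omega
          rw [hsplit, Nat.cast_add, natCast_val_self, Nat.cast_sub (le_of_lt hkp),
            ZMod.natCast_self]
          ring
        rw [hT]
        apply Finset.mem_union_right
        rw [heq2]
        exact Finset.mem_image_of_mem _ (Finset.mem_Ioo.mpr ⟨by omega, by omega⟩)
    have hinj : Set.InjOn (fun z => (a - 1) * z + (C - u)) U := by
      intro z1 _ z2 _ h
      simp only at h
      have h2 : (a - 1) * z1 = (a - 1) * z2 := by
        have h3 := congrArg (fun w => w - (C - u)) h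
        simpa using h3
      exact mul_left_cancel₀ (sub_ne_zero.mpr ha1) h2
    calc ∑ i, (itv (x i) (y i)).card = U.card := hcardU.symm
      _ ≤ T.card := Finset.card_le_card_of_injOn _ hmaps hinj
      _ ≤ L + (M - 1) := hTcard
  -- α bounds
  set α := a.val with hα
  have hva : ((α : ℕ) : ZMod p) = a := by rw [hα]; exact natCast_val_self a
  have hα0 : α ≠ 0 := fun h => ha0 (by rw [← hva, h]; simp)
  have hα1 : α ≠ 1 := fun h => ha1 (by rw [← hva, h]; simp)
  have hαlt : α < p := hα ▸ ZMod.val_lt a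
  have hαn1 : α ≠ p - 1 := by
    intro h
    apply han1
    have hpm1 : ((p - 1 : ℕ) : ZMod p) = -1 := by
      rw [Nat.cast_sub (by omega : 1 ≤ p)]
      simp
    rw [← hva, h, hpm1]
  have hα2 : 2 ≤ α := by omega
  have hαp : α ≤ p - 2 := by omega
  -- the path for i0
  set Mv := (y i0 - x i0).val with hMv
  have hMMv : M = Mv + 1 := by rw [hM, hi0, hmval]
  have hMp : M ≤ p - 1 := le_trans hMsum hsum
  set f : ℕ → ZMod p := fun k => (a * (x i0 + (k : ZMod p)) + (C - x i0)) - u with hf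
  set π : ℕ → ℕ := fun k => (f k).val with hπ
  have hπle : ∀ k ≤ Mv, π k ≤ (v - u).val := by
    intro k hk
    exact mem_itv.mp (hSm i0 _ (mem_itv_of _ _ k hk))
  have hstep : ∀ k < Mv, (π (k+1) = π k + α) ∨ (π (k+1) + p = π k + α) := by
    intro k hk
    have he : f (k+1) = f k + a := by
      simp only [hf]
      push_cast
      ring
    have hv : π (k+1) = (π k + α) % p := by
      rw [hπ]
      simp only [he, ZMod.val_add, hα]
    have hπp : π k < p := ZMod.val_lt _
    have hap : α < p := ZMod.val_lt _
    rcases Nat.lt_or_ge (π k + α) p with h | h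
    · left; rw [hv, Nat.mod_eq_of_lt h]
    · right
      have : (π k + α) % p = π k + α - p := by
        rw [Nat.mod_eq_sub_mod h, Nat.mod_eq_of_lt (by omega)]
      omega
  have hπinj : ∀ k ≤ Mv, ∀ j ≤ Mv, π k = π j → k = j := by
    intro k hk j hj hkj
    have hfe : f k = f j := val_inj' hkj
    have : a * (x i0 + (k : ZMod p)) = a * (x i0 + (j : ZMod p)) := by
      have := hfe
      simp only [hf] at this
      exact by
        have h2 := congrArg (fun w => w + u - (C - x i0)) this
        simpa [sub_add_cancel] using h2
    have hxe : x i0 + (k : ZMod p) = x i0 + (j : ZMod p) := mul_left_cancel₀ ha0 this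
    have hce : (k : ZMod p) = (j : ZMod p) := add_left_cancel hxe
    have := congrArg ZMod.val hce
    rwa [ZMod.val_cast_of_lt (by omega : k < p), ZMod.val_cast_of_lt (by omega : j < p)] at this
  -- case analysis
  by_cases hup : ∀ k < Mv, π (k+1) = π k + α
  · -- pure up
    have hall : ∀ k, k ≤ Mv → π k = π 0 + k * α := by
      intro k
      induction k with
      | zero => simp
      | succ k ih =>
        intro h
        rw [hup k (by omega), ih (by omega)]
        ring
    have h1 : π 0 + Mv * α ≤ (v - u).val := by
      rw [← hall Mv le_rfl]; exact hπle Mv le_rfl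
    have h2 : Mv * 2 ≤ Mv * α := Nat.mul_le_mul_left Mv hα2
    omega
  · push_neg at hup
    obtain ⟨k1, hk1, hk1n⟩ := hup
    have hk1d : π (k1+1) + p = π k1 + α := (hstep k1 hk1).resolve_left hk1n
    by_cases hdn : ∀ k < Mv, π (k+1) + p = π k + α
    · -- pure down
      have hall : ∀ k, k ≤ Mv → π k + k * (p - α) = π 0 := by
        intro k
        induction k with
        | zero => simp
        | succ k ih =>
          intro h
          have h1 := hdn k (by omega)
          have h2 := ih (by omega)
          have h3 : (k+1) * (p - α) = k * (p - α) + (p - α) := by ring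
          omega
      have h1 : Mv * (p - α) ≤ π 0 := by
        have := hall Mv le_rfl
        omega
      have h2 : π 0 ≤ (v - u).val := hπle 0 (by omega)
      have h3 : Mv * 2 ≤ Mv * (p - α) := Nat.mul_le_mul_left Mv (by omega)
      omega
    · -- mixed
      push_neg at hdn
      obtain ⟨k2, hk2, hk2n⟩ := hdn
      have hk2u : π (k2+1) = π k2 + α := (hstep k2 hk2).resolve_right hk2n
      -- α ≤ L - 1 and p - α ≤ L - 1
      have hαL : α ≤ (v - u).val := by
        have := hπle (k2+1) (by omega)
        omega
      have hα'L : p - α ≤ (v - u).val := by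
        have := hπle k1 (by omega)
        have := hπle (k1+1) (by omega)
        omega
      -- counting
      classical
      set Uf := (Finset.range Mv).filter (fun k => π (k+1) = π k + α) with hUf
      set Df := (Finset.range Mv).filter (fun k => ¬ (π (k+1) = π k + α)) with hDf
      have hsplit : Uf.card + Df.card = Mv := by
        rw [hUf, hDf, Finset.card_filter_add_card_filter_not, Finset.card_range]
      have hUcard : Uf.card ≤ (v - u).val + 1 - α := by
        have h := Finset.card_le_card_of_injOn (s := Uf)
          (t := Finset.range ((v - u).val + 1 - α)) (fun k => π k)
          (by
            intro k hk
            simp only [hUf, Finset.mem_coe, Finset.mem_filter, Finset.mem_range] at hk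
            have := hπle (k+1) (by omega)
            simp only [Finset.mem_coe, Finset.mem_range]
            omega)
          (by
            intro k hk j hj hkj
            simp only [hUf, Finset.coe_filter, Set.mem_setOf_eq, Finset.mem_range] at hk hj
            exact hπinj k (by omega) j (by omega) hkj)
        simpa using h
      have hDcard : Df.card ≤ (v - u).val + 1 - (p - α) := by
        have h := Finset.card_le_card_of_injOn (s := Df)
          (t := Finset.range ((v - u).val + 1 - (p - α))) (fun k => π k - (p - α))
          (by
            intro k hk
            simp only [hDf, Finset.mem_coe, Finset.mem_filter, Finset.mem_range] at hk
            have hd : π (k+1) + p = π k + α := (hstep k hk.1).resolve_left hk.2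
            have := hπle k (by omega)
            simp only [Finset.mem_coe, Finset.mem_range]
            omega)
          (by
            intro k hk j hj hkj
            simp only [hDf, Finset.coe_filter, Set.mem_setOf_eq, Finset.mem_range] at hk hj
            have hdk : π (k+1) + p = π k + α := (hstep k hk.1).resolve_left hk.2
            have hdj : π (j+1) + p = π j + α := (hstep j hj.1).resolve_left hj.2
            simp only at hkj
            apply hπinj k (by omega) j (by omega)
            omega)
        simpa using h
      omega
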